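/- Let Γ₀ be either K₁ (a single vertex) or K₂ (two vertices joined by an edge). Let Γ₁ be the disjoint union of m ≥ 1 copies of Γ₀, let Γ₂ be a finite simple graph none of whose connected components is isomorphic to Γ₀, and let Γ = Γ₁ ⊔ Γ₂, on n vertices with adjacency matrix ε. Then for every unital associative ℂ-algebra A and every matrix u ∈ M_n(A) satisfying the quantum automorphism relations for Γ, one has u_{ij} = 0 whenever i is a vertex of Γ₁ and j is a vertex of Γ₂, and also whenever i is a vertex of Γ₂ and j is a vertex of Γ₁ (i.e. u is block diagonal with respect to the decomposition of the vertex set). -/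

import Mathlib

open Matrix

/-- A matrix `u` over a (unital, associative) ring is a *magic matrix*. -/
def IsMagic {V : Type*} [Fintype V] [DecidableEq V] {A : Type*} [Ring A]
    (u : Matrix V V A) : Prop :=
  (∀ i j k, u i j * u i k = if j = k then u i j else 0) ∧
  (∀ i j k, u j i * u k i = if j = k then u j i else 0) ∧
  (∀ i, ∑ k, u i k = 1) ∧
  (∀ i, ∑ k, u k i = 1)

/-- `u` satisfies the quantum automorphism relations for the graph `Γ`. -/
def QuantumRel {V : Type*} [Fintype V] [DecidableEq V] (Γ : SimpleGraph V)
    {A : Type*} [Ring A] (u : Matrix V V A) : Prop :=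
  IsMagic u ∧
    ∀ i j k l, ¬ (Γ.Adj i j ↔ Γ.Adj k l) → u i k * u j l = 0 ∧ u j l * u i k = 0

/-- The disjoint union of `m` copies of a graph `Γ₀`. -/
def copies (m : ℕ) {V₀ : Type*} (Γ₀ : SimpleGraph V₀) : SimpleGraph (Fin m × V₀) where
  Adj a b := a.1 = b.1 ∧ Γ₀.Adj a.2 b.2
  symm := ⟨by intro a b h; exact ⟨h.1.symm, h.2.symm⟩⟩
  loopless := ⟨by intro a h; exact Γ₀.loopless.irrefl _ h.2⟩

section Aux

variable {V : Type*} [Fintype V] [DecidableEq V] {Γ : SimpleGraph V}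
  {A : Type*} [Ring A] {u : Matrix V V A}

lemma QR.transpose (h : QuantumRel Γ u) : QuantumRel Γ uᵀ := by
  obtain ⟨⟨hr, hc, hrs, hcs⟩, hrel⟩ := h
  refine ⟨⟨fun i j k => hc i j k, fun i j k => hr i j k, hcs, hrs⟩, ?_⟩
  intro i j k l hne
  have := hrel k l i j (fun hiff => hne hiff.symm)
  exact ⟨this.1, this.2⟩

lemma qa_isolated_row (h : QuantumRel Γ u) {i k k' : V} (hi : ∀ j, ¬Γ.Adj i j)
    (hk : Γ.Adj k k') : u i k = 0 := by
  calc u i k = u i k * ∑ j, u j k' := by rw [h.1.2.2.2 k', mul_one]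
    _ = ∑ j, u i k * u j k' := Finset.mul_sum _ _ _
    _ = 0 := Finset.sum_eq_zero fun j _ =>
        (h.2 i j k k' (by simp [hi j, hk])).1

lemma qa_isolated_col (h : QuantumRel Γ u) {i i' k : V} (hk : ∀ l, ¬Γ.Adj k l)
    (hi : Γ.Adj i i') : u i k = 0 := by
  calc u i k = u i k * ∑ l, u i' l := by rw [h.1.2.2.1 i', mul_one]
    _ = ∑ l, u i k * u i' l := Finset.mul_sum _ _ _
    _ = 0 := Finset.sum_eq_zero fun l _ =>
        (h.2 i i' k l (by simp [hk l, hi])).1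

lemma qa_R (h : QuantumRel Γ u) {i i' k l : V}
    (huniq : ∀ j, Γ.Adj i j → j = i') (hkl : Γ.Adj k l) :
    u i k = u i k * u i' l := by
  calc u i k = u i k * ∑ j, u j l := by rw [h.1.2.2.2 l, mul_one]
    _ = ∑ j, u i k * u j l := Finset.mul_sum _ _ _
    _ = u i k * u i' l := by
        refine Finset.sum_eq_single i' (fun j _ hj => ?_) (by simp)
        exact (h.2 i j k l (fun hiff => hj (huniq j (hiff.mpr hkl)))).1

lemma qa_L (h : QuantumRel Γ u) {i i' k l : V}
    (huniq : ∀ j, Γ.Adj i j → j = i') (hkl : Γ.Adj k l) :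
    u i k = u i' l * u i k := by
  calc u i k = (∑ j, u j l) * u i k := by rw [h.1.2.2.2 l, one_mul]
    _ = ∑ j, u j l * u i k := Finset.sum_mul _ _ _
    _ = u i' l * u i k := by
        refine Finset.sum_eq_single i' (fun j _ hj => ?_) (by simp)
        exact (h.2 i j k l (fun hiff => hj (huniq j (hiff.mpr hkl)))).2

lemma qa_K2 (h : QuantumRel Γ u) {i i' : V} (hii' : Γ.Adj i i')
    (h1 : ∀ j, Γ.Adj i j → j = i') (h2 : ∀ j, Γ.Adj i' j → j = i) {k : V}
    (hk : (∀ l, ¬Γ.Adj k l) ∨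
      ∃ l, Γ.Adj k l ∧ ∃ s, (Γ.Adj k s ∧ s ≠ l) ∨ (Γ.Adj l s ∧ s ≠ k)) :
    u i k = 0 := by
  rcases hk with hk | ⟨l, hkl, s, ⟨hks, hsl⟩ | ⟨hls, hsk⟩⟩
  · exact qa_isolated_col h hk hii'
  · have e1 := qa_R h h1 hkl
    have e2 := qa_R h h1 hks
    have h0 : u i' s * u i' l = 0 := by rw [h.1.1 i' s l, if_neg hsl]
    calc u i k = u i k * u i' l := e1
      _ = (u i k * u i' s) * u i' l := by rw [← e2]
      _ = u i k * (u i' s * u i' l) := by rw [mul_assoc]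
      _ = 0 := by rw [h0, mul_zero]
  · have e1 := qa_L h h1 hkl
    have e2 := qa_L h h2 hls
    have h0 : u i s * u i k = 0 := by rw [h.1.1 i s k, if_neg hsk]
    calc u i k = u i' l * u i k := e1
      _ = (u i s * u i' l) * u i k := by rw [← e2]
      _ = u i s * (u i' l * u i k) := by rw [mul_assoc]
      _ = u i s * u i k := by rw [← e1]
      _ = 0 := h0

lemma iso_single {W V₀ : Type*} [DecidableEq W] {Γ₂ : SimpleGraph W}
    {Γ₀ : SimpleGraph V₀} {w : W}
    (hw : ∀ v, ¬Γ₂.Adj w v) (e : Γ₀ ≃g (⊥ : SimpleGraph (Fin 1))) :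
    Nonempty ((Γ₂.induce (Γ₂.connectedComponentMk w).supp) ≃g Γ₀) := by
  have hmemw : w ∈ (Γ₂.connectedComponentMk w).supp := rfl
  have hmem : ∀ v ∈ (Γ₂.connectedComponentMk w).supp, v = w := by
    intro v hv
    rw [SimpleGraph.ConnectedComponent.mem_supp_iff, SimpleGraph.ConnectedComponent.eq] at hv
    obtain ⟨p⟩ := hv.symm
    cases p with
    | nil => rfl
    | cons h q => exact absurd h (hw _)
  refine ⟨(?_ : _ ≃g (⊥ : SimpleGraph (Fin 1))).trans e.symm⟩
  refine ⟨⟨fun _ => 0, fun _ => ⟨w, hmemw⟩, fun x => Subtype.ext (hmem _ x.2).symm,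
    fun i => Subsingleton.elim _ _⟩, ?_⟩
  intro a b
  simp only [SimpleGraph.bot_adj, SimpleGraph.comap_adj, Function.Embedding.coe_subtype,
    false_iff]
  intro hab
  have ha := hmem _ a.2
  rw [ha] at hab
  exact hw _ hab

lemma iso_pair {W V₀ : Type*} [DecidableEq W] {Γ₂ : SimpleGraph W}
    {Γ₀ : SimpleGraph V₀} {w w' : W}
    (hww' : Γ₂.Adj w w')
    (hcl : ∀ s, (Γ₂.Adj w s → s = w') ∧ (Γ₂.Adj w' s → s = w))
    (e : Γ₀ ≃g (⊤ : SimpleGraph (Fin 2))) :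
    Nonempty ((Γ₂.induce (Γ₂.connectedComponentMk w).supp) ≃g Γ₀) := by
  have hne : w ≠ w' := hww'.ne
  have hmemw : w ∈ (Γ₂.connectedComponentMk w).supp := rfl
  have hmemw' : w' ∈ (Γ₂.connectedComponentMk w).supp := by
    rw [SimpleGraph.ConnectedComponent.mem_supp_iff, SimpleGraph.ConnectedComponent.eq]
    exact hww'.symm.reachable
  have walk_mem : ∀ {x v : W}, Γ₂.Walk x v → x = w ∨ x = w' → v = w ∨ v = w' := by
    intro x v p
    induction p with
    | nil => exact id
    | cons h q ih =>
      rintro (rfl | rfl)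
      · exact ih (Or.inr ((hcl _).1 h))
      · exact ih (Or.inl ((hcl _).2 h))
  have hmem : ∀ v ∈ (Γ₂.connectedComponentMk w).supp, v = w ∨ v = w' := by
    intro v hv
    rw [SimpleGraph.ConnectedComponent.mem_supp_iff, SimpleGraph.ConnectedComponent.eq] at hv
    obtain ⟨p⟩ := hv.symm
    exact walk_mem p (Or.inl rfl)
  have key : ∀ x y : W, x = w ∨ x = w' → y = w ∨ y = w' → (Γ₂.Adj x y ↔ x ≠ y) := by
    rintro x y (rfl | rfl) (rfl | rfl)
    · simp
    · simp [hww', hne]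
    · simp [hww'.symm, hne.symm]
    · simp
  refine ⟨(?_ : _ ≃g (⊤ : SimpleGraph (Fin 2))).trans e.symm⟩
  refine ⟨⟨fun x => if (x : W) = w then 0 else 1,
    fun i => if i = 0 then ⟨w, hmemw⟩ else ⟨w', hmemw'⟩, ?_, ?_⟩, ?_⟩
  · intro x
    rcases hmem _ x.2 with h | h
    · simp only [h, if_pos rfl, if_pos]
      exact Subtype.ext h.symm
    · have hxw : (x : W) ≠ w := by rw [h]; exact hne.symm
      simp only [hxw, if_neg, if_false]
      rw [if_neg (by decide : (1:Fin 2) ≠ 0)]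
      exact Subtype.ext h.symm
  · intro i
    fin_cases i
    · simp
    · simp [hne.symm]
  · intro a b
    simp only [SimpleGraph.top_adj, SimpleGraph.comap_adj, Function.Embedding.coe_subtype,
      Equiv.coe_fn_mk]
    rw [key _ _ (hmem _ a.2) (hmem _ b.2)]
    constructor
    · intro hab hval
      exact hab (by rw [hval])
    · intro hval hab
      rcases hmem _ a.2 with ha | ha <;> rcases hmem _ b.2 with hb | hb
      · exact hval (ha.trans hb.symm)
      · rw [if_pos ha, if_neg (by rw [hb]; exact hne.symm)] at hab
        exact absurd hab (by decide)
      · rw [if_neg (by rw [ha]; exact hne.symm), if_pos hb] at hab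
        exact absurd hab (by decide)
      · exact hval (ha.trans hb.symm)

end Aux

theorem block_diagonal_of_small_components {V₀ W : Type*} [Fintype V₀] [DecidableEq V₀]
    [Fintype W] [DecidableEq W] (Γ₀ : SimpleGraph V₀)
    (h₀ : Nonempty (Γ₀ ≃g (⊥ : SimpleGraph (Fin 1))) ∨
      Nonempty (Γ₀ ≃g (⊤ : SimpleGraph (Fin 2))))
    (m : ℕ) (hm : 1 ≤ m)
    (Γ₂ : SimpleGraph W)
    (hΓ₂ : ∀ c : Γ₂.ConnectedComponent, ¬ Nonempty ((Γ₂.induce c.supp) ≃g Γ₀))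
    (A : Type*) [Ring A] [Algebra ℂ A]
    (u : Matrix ((Fin m × V₀) ⊕ W) ((Fin m × V₀) ⊕ W) A)
    (hu : QuantumRel (copies m Γ₀ ⊕g Γ₂) u) :
    (∀ (a : Fin m × V₀) (w : W), u (Sum.inl a) (Sum.inr w) = 0) ∧
    (∀ (a : Fin m × V₀) (w : W), u (Sum.inr w) (Sum.inl a) = 0) := by
  have adj_lr : ∀ (a : Fin m × V₀) (v : W),
      ¬(copies m Γ₀ ⊕g Γ₂).Adj (Sum.inl a) (Sum.inr v) := by
    intro a v h; simpa using h
  have adj_rl : ∀ (v : W) (a : Fin m × V₀),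
      ¬(copies m Γ₀ ⊕g Γ₂).Adj (Sum.inr v) (Sum.inl a) := by
    intro v a h; simpa using h
  have adj_ll : ∀ (a b : Fin m × V₀),
      (copies m Γ₀ ⊕g Γ₂).Adj (Sum.inl a) (Sum.inl b) ↔ (copies m Γ₀).Adj a b := by
    intro a b; simp
  have adj_rr : ∀ (v v' : W),
      (copies m Γ₀ ⊕g Γ₂).Adj (Sum.inr v) (Sum.inr v') ↔ Γ₂.Adj v v' := by
    intro v v'; simp
  rcases h₀ with he | he
  · -- K₁ case
    obtain ⟨e⟩ := he
    have hE : ∀ x y, ¬Γ₀.Adj x y := by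
      intro x y h
      simpa using e.map_rel_iff.mpr h
    have hiso : ∀ (a : Fin m × V₀) (j : (Fin m × V₀) ⊕ W),
        ¬(copies m Γ₀ ⊕g Γ₂).Adj (Sum.inl a) j := by
      rintro a (b | v) h
      · exact hE _ _ ((adj_ll a b).mp h).2
      · exact adj_lr a v h
    have hnbr : ∀ w : W, ∃ v, Γ₂.Adj w v := by
      intro w
      by_contra hc
      push_neg at hc
      exact hΓ₂ _ (iso_single hc e)
    constructor
    · intro a w
      obtain ⟨v, hv⟩ := hnbr w
      exact qa_isolated_row hu (hiso a) ((adj_rr w v).mpr hv)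
    · intro a w
      obtain ⟨v, hv⟩ := hnbr w
      exact qa_isolated_row (QR.transpose hu) (hiso a) ((adj_rr w v).mpr hv)
  · -- K₂ case
    obtain ⟨e⟩ := he
    have fin2_ne : ∀ a : Fin 2, a + 1 ≠ a := by decide
    have fin2_eq : ∀ a b : Fin 2, a ≠ b → b = a + 1 := by decide
    have fin2_add : ∀ a : Fin 2, a + 1 + 1 = a := by decide
    have hadj₀ : ∀ x y : V₀, Γ₀.Adj x y ↔ x ≠ y := by
      intro x y
      constructor
      · exact fun h => h.ne
      · intro h
        have htop : (⊤ : SimpleGraph (Fin 2)).Adj (e x) (e y) := by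
          simp only [SimpleGraph.top_adj]
          exact fun hxy => h (e.toEquiv.injective hxy)
        exact e.map_rel_iff.mp htop
    have hP : ∃ p : V₀ → V₀, (∀ x, Γ₀.Adj x (p x)) ∧ (∀ x y, Γ₀.Adj x y → y = p x) ∧
        (∀ x, p (p x) = x) := by
      refine ⟨fun x => e.toEquiv.symm (e.toEquiv x + 1), ?_, ?_, ?_⟩
      · intro x
        rw [hadj₀]
        intro h
        apply fin2_ne (e.toEquiv x)
        have h2 := congrArg e.toEquiv h.symm
        rwa [Equiv.apply_symm_apply] at h2
      · intro x y h
        have hne : e.toEquiv x ≠ e.toEquiv y :=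
          fun hxy => (hadj₀ x y).mp h (e.toEquiv.injective hxy)
        have h3 : e.toEquiv y = e.toEquiv x + 1 := fin2_eq _ _ hne
        have h4 := congrArg e.toEquiv.symm h3
        rwa [Equiv.symm_apply_apply] at h4
      · intro x
        show e.toEquiv.symm (e.toEquiv (e.toEquiv.symm (e.toEquiv x + 1)) + 1) = x
        rw [Equiv.apply_symm_apply, fin2_add, Equiv.symm_apply_apply]
    obtain ⟨p, hadjp, huniq₀, hpp⟩ := hP
    have hii' : ∀ (t : Fin m) (x : V₀),
        (copies m Γ₀ ⊕g Γ₂).Adj (Sum.inl (t, x)) (Sum.inl (t, p x)) := by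
      intro t x
      exact (adj_ll _ _).mpr ⟨rfl, hadjp x⟩
    have h1 : ∀ (t : Fin m) (x : V₀) (j : (Fin m × V₀) ⊕ W),
        (copies m Γ₀ ⊕g Γ₂).Adj (Sum.inl (t, x)) j → j = Sum.inl (t, p x) := by
      rintro t x (⟨s, y⟩ | v) h
      · obtain ⟨hts, hxy⟩ := (adj_ll _ _).mp h
        simp only [Sum.inl.injEq, Prod.mk.injEq]
        exact ⟨hts.symm, huniq₀ x y hxy⟩
      · exact absurd h (adj_lr _ _)
    have h2 : ∀ (t : Fin m) (x : V₀) (j : (Fin m × V₀) ⊕ W),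
        (copies m Γ₀ ⊕g Γ₂).Adj (Sum.inl (t, p x)) j → j = Sum.inl (t, x) := by
      intro t x j h
      have := h1 t (p x) j h
      rwa [hpp x] at this
    have hk : ∀ w : W, (∀ l, ¬(copies m Γ₀ ⊕g Γ₂).Adj (Sum.inr w) l) ∨
        ∃ l, (copies m Γ₀ ⊕g Γ₂).Adj (Sum.inr w) l ∧
          ∃ s, ((copies m Γ₀ ⊕g Γ₂).Adj (Sum.inr w) s ∧ s ≠ l) ∨
            ((copies m Γ₀ ⊕g Γ₂).Adj l s ∧ s ≠ Sum.inr w) := by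
      intro w
      by_cases hiso : ∀ v, ¬Γ₂.Adj w v
      · left
        rintro (b | v) h
        · exact adj_rl _ _ h
        · exact hiso v ((adj_rr _ _).mp h)
      · push_neg at hiso
        obtain ⟨w', hw'⟩ := hiso
        by_cases hex : ∃ s, (Γ₂.Adj w s ∧ s ≠ w') ∨ (Γ₂.Adj w' s ∧ s ≠ w)
        · obtain ⟨s, hs | hs⟩ := hex
          · exact Or.inr ⟨Sum.inr w', (adj_rr _ _).mpr hw', Sum.inr s,
              Or.inl ⟨(adj_rr _ _).mpr hs.1, fun h => hs.2 (Sum.inr.inj h)⟩⟩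
          · exact Or.inr ⟨Sum.inr w', (adj_rr _ _).mpr hw', Sum.inr s,
              Or.inr ⟨(adj_rr _ _).mpr hs.1, fun h => hs.2 (Sum.inr.inj h)⟩⟩
        · exfalso
          push_neg at hex
          exact hΓ₂ _ (iso_pair hw' hex e)
    constructor
    · rintro ⟨t, x⟩ w
      exact qa_K2 hu (hii' t x) (h1 t x) (h2 t x) (hk w)
    · rintro ⟨t, x⟩ w
      exact qa_K2 (QR.transpose hu) (hii' t x) (h1 t x) (h2 t x) (hk w)
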